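/- Let b(g,k) be Harer–Zagier coefficients (so they are uniquely determined rational numbers). Then for every g ≥ 1 and every 0 ≤ k ≤ g−1, the number b(g,k) is a positive integer. -/

import Mathlib

open scoped Nat


noncomputable def hzH : PowerSeries ℚ :=
  PowerSeries.mk fun m => if m % 2 = 1 ∧ 3 ≤ m then (m : ℚ)⁻¹ else 0

noncomputable def hzC (j m : ℕ) : ℚ := PowerSeries.coeff m (hzH ^ j)

open PowerSeries in
lemma hz_coeff_derivativeFun (f : ℚ⟦X⟧) (n : ℕ) :
    coeff n f.derivativeFun = coeff (n + 1) f * (n + 1) :=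
  coeff_derivative f n

open PowerSeries in
lemma hzH_deriv : (1 - X ^ 2 : ℚ⟦X⟧) * hzH.derivativeFun = X ^ 2 := by
  ext n
  simp only [sub_mul, one_mul, map_sub, coeff_X_pow_mul', hz_coeff_derivativeFun, coeff_X_pow,
    hzH, coeff_mk]
  rcases n with _ | _ | n
  · norm_num
  · norm_num
  · rcases Nat.even_or_odd n with hpar | hpar
    · rw [Nat.even_iff] at hpar
      rw [if_pos (by omega), if_pos (by omega)]
      have e1 : ((n + 2 + 1 : ℕ) : ℚ) ≠ 0 := by positivity
      have e2 : (((n + 2) : ℕ) : ℚ) + 1 = ((n + 2 + 1 : ℕ) : ℚ) := by push_cast; ring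
      rcases Nat.eq_zero_or_pos n with rfl | hn
      · norm_num
      · rw [if_pos (by omega), if_neg (by omega)]
        have e3 : n + 2 - 2 + 1 = n + 1 := by omega
        have e4 : n + 2 - 2 = n := by omega
        rw [e3, e4]
        have e5 : ((n : ℕ) : ℚ) + 1 = ((n + 1 : ℕ) : ℚ) := by push_cast; ring
        have e6 : ((n + 1 : ℕ) : ℚ) ≠ 0 := by positivity
        rw [e2, e5, inv_mul_cancel₀ e1, inv_mul_cancel₀ e6]
        ring
    · rw [Nat.odd_iff] at hpar
      rw [if_neg (by omega), if_pos (by omega)]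
      have e3 : n + 2 - 2 + 1 = n + 1 := by omega
      rw [e3, if_neg (by omega), if_neg (by omega)]
      ring

open PowerSeries in
lemma hzH_deriv_pow (j : ℕ) :
    (1 - X ^ 2 : ℚ⟦X⟧) * (hzH ^ (j + 1)).derivativeFun =
      C ((j : ℚ) + 1) * (X ^ 2 * hzH ^ j) := by
  induction j with
  | zero =>
    simp only [zero_add, pow_one, pow_zero, mul_one, Nat.cast_zero]
    rw [hzH_deriv]
    simp
  | succ j ih =>
    have step : (hzH ^ (j + 2)).derivativeFun
        = hzH ^ (j + 1) • hzH.derivativeFun + hzH • (hzH ^ (j + 1)).derivativeFun := by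
      rw [pow_succ]
      exact derivativeFun_mul _ _
    rw [step, smul_eq_mul, smul_eq_mul, mul_add]
    have h1 : (1 - X ^ 2 : ℚ⟦X⟧) * (hzH ^ (j + 1) * hzH.derivativeFun)
        = hzH ^ (j + 1) * ((1 - X ^ 2) * hzH.derivativeFun) := by ring
    have h2 : (1 - X ^ 2 : ℚ⟦X⟧) * (hzH * (hzH ^ (j + 1)).derivativeFun)
        = hzH * ((1 - X ^ 2) * (hzH ^ (j + 1)).derivativeFun) := by ring
    rw [h1, h2, hzH_deriv, ih]
    have h3 : (C ((j : ℚ) + 1 + 1)) = C ((j : ℚ) + 1) + 1 := by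
      rw [map_add, map_one]
    push_cast
    rw [h3]
    ring

lemma hzC_rec (j m : ℕ) :
    ((m : ℚ) + 3) * hzC (j + 1) (m + 3) =
      ((m : ℚ) + 1) * hzC (j + 1) (m + 1) + ((j : ℚ) + 1) * hzC j m := by
  have := congrArg (PowerSeries.coeff (m + 2)) (hzH_deriv_pow j)
  rw [sub_mul, one_mul, map_sub, PowerSeries.coeff_X_pow_mul',
    hz_coeff_derivativeFun, PowerSeries.coeff_C_mul,
    PowerSeries.coeff_X_pow_mul', if_pos (by omega), if_pos (by omega)] at this
  have e1 : m + 2 - 2 = m := by omega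
  have e2 : m + 2 - 2 + 1 = m + 1 := by omega
  rw [e1, hz_coeff_derivativeFun] at this
  unfold hzC
  have e3 : m + 2 + 1 = m + 3 := by omega
  rw [e3] at this
  push_cast at this ⊢
  linarith [this]

lemma hzC_vanish : ∀ j m : ℕ, m < 3 * j → hzC j m = 0 := by
  intro j
  induction j with
  | zero => intro m hm; omega
  | succ j ih =>
    intro m hm
    unfold hzC
    rw [pow_succ, PowerSeries.coeff_mul]
    apply Finset.sum_eq_zero
    rintro ⟨p, q⟩ hp
    rw [Finset.HasAntidiagonal.mem_antidiagonal] at hp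
    simp only at hp ⊢
    by_cases hcase : p < 3 * j
    · have : hzC j p = 0 := ih p hcase
      unfold hzC at this
      rw [this, zero_mul]
    · have hq : q < 3 := by omega
      have : PowerSeries.coeff q hzH = 0 := by
        simp only [hzH, PowerSeries.coeff_mk]
        rw [if_neg (by omega)]
      rw [this, mul_zero]

lemma hzC_zero (m : ℕ) : hzC 0 m = if m = 0 then 1 else 0 := by
  unfold hzC
  rw [pow_zero, PowerSeries.coeff_one]

lemma hzC_one_three : hzC 1 3 = 3⁻¹ := by
  unfold hzC
  rw [pow_one]
  simp only [hzH, PowerSeries.coeff_mk]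
  norm_num

def OddDen (q : ℚ) : Prop := ∃ (a : ℤ) (w : ℕ), w % 2 = 1 ∧ (w : ℚ) * q = a

lemma OddDen.zero : OddDen 0 := ⟨0, 1, by norm_num⟩

lemma OddDen.add {q r : ℚ} (hq : OddDen q) (hr : OddDen r) : OddDen (q + r) := by
  obtain ⟨a, w, hw, ha⟩ := hq
  obtain ⟨b, u, hu, hb⟩ := hr
  refine ⟨a * u + b * w, w * u, ?_, ?_⟩
  · rw [Nat.mul_mod, hw, hu]
  · push_cast
    calc ((w : ℚ) * u) * (q + r) = ((u:ℚ)) * ((w:ℚ) * q) + ((w:ℚ)) * ((u:ℚ) * r) := by ring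
    _ = (a : ℚ) * u + (b : ℚ) * w := by rw [ha, hb]; ring

lemma hzC_oddDen : ∀ j m : ℕ, OddDen (hzC j m) := by
  intro j
  induction j with
  | zero =>
    intro m
    rw [hzC_zero]
    split_ifs
    · exact ⟨1, 1, by norm_num⟩
    · exact OddDen.zero
  | succ j ih =>
    intro m
    unfold hzC
    rw [pow_succ, PowerSeries.coeff_mul]
    apply Finset.sum_induction _ OddDen (fun a b ha hb => ha.add hb) OddDen.zero
    rintro ⟨p, q⟩ -
    simp only
    have hh : PowerSeries.coeff q hzH = if q % 2 = 1 ∧ 3 ≤ q then (q : ℚ)⁻¹ else 0 := by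
      simp [hzH, PowerSeries.coeff_mk]
    rw [hh]
    split_ifs with hcond
    · obtain ⟨a, w, hw, ha⟩ := ih p
      refine ⟨a, w * q, by rw [Nat.mul_mod, hw, hcond.1], ?_⟩
      have hq0 : (q : ℚ) ≠ 0 := by
        have : 3 ≤ q := hcond.2
        positivity
      push_cast
      have : (w : ℚ) * (q:ℚ) * ((PowerSeries.coeff p) (hzH ^ j) * (q:ℚ)⁻¹)
          = ((w : ℚ) * (PowerSeries.coeff p) (hzH ^ j)) * ((q:ℚ) * (q:ℚ)⁻¹) := by ring
      rw [this, mul_inv_cancel₀ hq0, mul_one]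
      exact ha
    · rw [mul_zero]; exact OddDen.zero

lemma hzC_vanish_small (m : ℕ) (hm : m ≤ 2) (j : ℕ) : hzC (j + 1) m = 0 :=
  hzC_vanish (j + 1) m (by omega)

lemma hzC_int : ∀ m j : ℕ, ∃ d : ℤ, ((m ! : ℚ)) * 2 ^ j * hzC j m = ((j ! : ℚ)) * d := by
  intro m
  induction m using Nat.strong_induction_on with
  | _ m ih =>
    match m with
    | 0 =>
      intro j
      match j with
      | 0 => exact ⟨1, by rw [hzC_zero]; norm_num⟩
      | j + 1 =>
        exact ⟨0, by rw [hzC_vanish_small _ (by norm_num) j]; norm_num⟩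
    | 1 =>
      intro j
      match j with
      | 0 => exact ⟨0, by rw [hzC_zero]; norm_num⟩
      | j + 1 =>
        exact ⟨0, by rw [hzC_vanish_small _ (by norm_num) j]; norm_num⟩
    | 2 =>
      intro j
      match j with
      | 0 => exact ⟨0, by rw [hzC_zero]; norm_num⟩
      | j + 1 =>
        exact ⟨0, by rw [hzC_vanish_small _ (by norm_num) j]; norm_num⟩
    | m + 3 =>
      intro j
      match j with
      | 0 =>
        refine ⟨0, ?_⟩
        rw [hzC_zero, if_neg (by omega)]
        norm_num
      | j + 1 =>
        obtain ⟨d1, hd1⟩ := ih (m + 1) (by omega) (j + 1)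
        obtain ⟨d2, hd2⟩ := ih m (by omega) j
        refine ⟨((m : ℤ) + 2) * ((m : ℤ) + 1) * (d1 + 2 * d2), ?_⟩
        have hKI := hzC_rec j m
        simp only [Nat.factorial_succ] at hd1 ⊢
        push_cast at hd1 hd2 ⊢
        linear_combination (((m:ℚ)+2) * ((m:ℚ)+1) * (m !) * 2 ^ (j+1)) * hKI
          + (((m:ℚ)+2) * ((m:ℚ)+1)) * hd1
          + (2 * ((j:ℚ)+1) * ((m:ℚ)+2) * ((m:ℚ)+1)) * hd2
def odf : ℕ → ℕ
  | 0 => 1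
  | n + 1 => (2 * n + 3) * odf n

lemma odf_pos (n : ℕ) : 0 < odf n := by
  induction n with
  | zero => simp [odf]
  | succ n ih => simp only [odf]; positivity

lemma odf_odd (n : ℕ) : odf n % 2 = 1 := by
  induction n with
  | zero => rfl
  | succ n ih =>
    simp only [odf]
    rw [Nat.mul_mod, ih]
    omega

lemma factorial_two_mul (m : ℕ) : (2 * (m + 1))! = 2 ^ (m + 1) * (m + 1)! * odf m := by
  induction m with
  | zero => rfl
  | succ m ih =>
    have h1 : 2 * (m + 2) = 2 * (m + 1) + 1 + 1 := by ring
    rw [h1, Nat.factorial_succ, Nat.factorial_succ, ih]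
    simp only [odf]
    rw [show (m + 1 + 1)! = (m + 1 + 1) * (m + 1)! from Nat.factorial_succ (m + 1)]
    ring

lemma two_pow_not_dvd_factorial : ∀ m : ℕ, 1 ≤ m → ∀ e : ℕ, 2 ^ e ∣ m ! → e < m := by
  intro m
  induction m using Nat.strong_induction_on with
  | _ m ih =>
    intro hm e he
    rcases Nat.even_or_odd m with ⟨n, hn⟩ | ⟨n, hn⟩
    · -- m = 2n, n ≥ 1
      have hn1 : 1 ≤ n := by omega
      obtain ⟨n', rfl⟩ : ∃ n', n = n' + 1 := ⟨n - 1, by omega⟩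
      have hm' : m = 2 * (n' + 1) := by omega
      rw [hm', factorial_two_mul] at he
      have hcop : Nat.Coprime (2 ^ e) (odf n') := by
        apply Nat.Coprime.pow_left
        rw [Nat.coprime_two_left, Nat.odd_iff]
        exact odf_odd n'
      have he2 : 2 ^ e ∣ 2 ^ (n' + 1) * (n' + 1)! :=
        (Nat.Coprime.dvd_of_dvd_mul_right hcop) he
      rcases le_or_gt e (n' + 1) with hle | hlt
      · omega
      · obtain ⟨e', rfl⟩ : ∃ e', e = (n' + 1) + e' := ⟨e - (n' + 1), by omega⟩
        rw [pow_add] at he2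
        have he3 : 2 ^ e' ∣ (n' + 1)! := by
          have h2 : (0:ℕ) < 2 ^ (n' + 1) := by positivity
          exact (Nat.mul_dvd_mul_iff_left h2).mp he2
        have := ih (n' + 1) (by omega) (by omega) e' he3
        omega
    · -- m = 2n + 1
      rcases Nat.eq_zero_or_pos n with rfl | hn1
      · -- m = 1
        have hfac : m ! = 1 := by rw [hn]; rfl
        rw [hfac] at he
        have h1 : 2 ^ e = 1 := Nat.dvd_one.mp he
        have h2 : e = 0 := by
          by_contra hc
          have : 2 ≤ 2 ^ e := by
            calc 2 = 2 ^ 1 := rfl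
            _ ≤ 2 ^ e := Nat.pow_le_pow_right (by norm_num) (by omega)
          omega
        omega
      · have hm' : m = (2 * n) + 1 := by omega
        rw [hm', Nat.factorial_succ] at he
        have hcop : Nat.Coprime (2 ^ e) (2 * n + 1) := by
          apply Nat.Coprime.pow_left
          rw [Nat.coprime_two_left]
          exact ⟨n, by omega⟩
        have he2 : 2 ^ e ∣ (2 * n)! := (Nat.Coprime.dvd_of_dvd_mul_left hcop) he
        have := ih (2 * n) (by omega) (by omega) e he2
        omega


lemma odf_succ (n : ℕ) : odf (n + 1) = (2 * n + 3) * odf n := rfl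

section Main

variable (b : ℕ → ℤ → ℚ)
    (hb_supp : ∀ g : ℕ, 1 ≤ g → ∀ k : ℤ, ¬ (0 ≤ k ∧ k ≤ (g : ℤ) - 1) → b g k = 0)
    (hb1 : b 1 0 = 1)
    (hrec : ∀ g : ℕ, 1 ≤ g → ∀ k : ℤ, 0 ≤ k → k ≤ (g : ℤ) →
      (4 * (g : ℚ) + 2 * (k : ℚ) + 6) * b (g + 1) k =
        (4 * (g : ℚ) + 2 * (k : ℚ) + 1) * (4 * (g : ℚ) + 2 * (k : ℚ) + 3) *
          ((4 * (g : ℚ) + 2 * (k : ℚ) + 2) * b g k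
            + 4 * (4 * (g : ℚ) + 2 * (k : ℚ) - 1) * b g (k - 1)))

include hb_supp hb1 hrec in
lemma hz_main : ∀ g' k : ℕ,
    b (g' + 1) ((k : ℕ) : ℤ) * ((k + 1)! : ℚ)
      = ((odf (2 * g' + k + 1) : ℕ) : ℚ) * 2 ^ k * hzC (k + 1) (2 * g' + k + 3) := by
  intro g'
  induction g' with
  | zero =>
    intro k
    match k with
    | 0 =>
      have h1 : hzC 1 3 = 3⁻¹ := hzC_one_three
      simp only [Nat.mul_zero, Nat.zero_add, Nat.cast_ofNat, Nat.zero_mul]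
      norm_num [hb1, h1, odf]
    | k + 1 =>
      have hz : b 1 ((k + 1 : ℕ) : ℤ) = 0 := by
        apply hb_supp 1 (by omega)
        push_cast
        omega
      have hv : hzC (k + 1 + 1) (2 * 0 + (k + 1) + 3) = 0 :=
        hzC_vanish _ _ (by omega)
      rw [hz, hv]
      ring
  | succ g' IH =>
    intro k
    by_cases hk : k ≤ g' + 1
    · match k, hk with
      | 0, _ =>
        have E1 := hrec (g' + 1) (by omega) 0 (by norm_num)
          (by exact_mod_cast Int.ofNat_nonneg (g' + 1))
        have hprev : b (g' + 1) (0 - 1) = 0 := by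
          apply hb_supp (g' + 1) (by omega)
          intro hcon
          omega
        have IH0 := IH 0
        have KI := hzC_rec 0 (2 * g' + 2)
        have hz0 : hzC 0 (2 * g' + 2) = 0 := by
          rw [hzC_zero, if_neg (by omega)]
        have hO1 : odf (2 * g' + 3) = (4 * g' + 7) * ((4 * g' + 5) * odf (2 * g' + 1)) := by
          have e1 : 2 * g' + 3 = (2 * g' + 2) + 1 := by omega
          have e2 : 2 * g' + 2 = (2 * g' + 1) + 1 := by omega
          rw [e1, odf_succ, e2, odf_succ]
          ring
        have e3 : 2 * (g' + 1) + 0 + 1 = 2 * g' + 3 := by omega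
        have e4 : 2 * (g' + 1) + 0 + 3 = 2 * g' + 2 + 3 := by omega
        have e5 : 2 * g' + 0 + 3 = 2 * g' + 2 + 1 := by omega
        rw [e3, e4, hO1]
        rw [e5] at IH0
        rw [hprev, mul_zero, add_zero] at E1
        rw [hz0, mul_zero, add_zero] at KI
        have hne : (4 * ((g' : ℚ) + 1) + 2 * ((0 : ℤ) : ℚ) + 6) ≠ 0 := by
          push_cast
          positivity
        apply mul_left_cancel₀ hne
        simp only [zero_add, Nat.factorial_one] at IH0 ⊢
        push_cast at E1 IH0 KI ⊢
        linear_combination (1 : ℚ) * E1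
          + (4 * (g' : ℚ) + 5) * (4 * (g' : ℚ) + 7) * (4 * (g' : ℚ) + 6) * IH0
          - (4 * (g' : ℚ) + 5) * (4 * (g' : ℚ) + 7) * 2
              * ((odf (2 * g' + 1) : ℕ) : ℚ) * KI
      | (k'' + 1), hk2 =>
        have hkle : ((k'' + 1 : ℕ) : ℤ) ≤ ((g' + 1 : ℕ) : ℤ) := by exact_mod_cast hk2
        have E1 := hrec (g' + 1) (by omega) ((k'' + 1 : ℕ) : ℤ) (by positivity) hkle
        have hcast : ((k'' + 1 : ℕ) : ℤ) - 1 = ((k'' : ℕ) : ℤ) := by push_cast; ring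
        rw [hcast] at E1
        have IH1 := IH (k'' + 1)
        have IH2 := IH k''
        have KI := hzC_rec (k'' + 1) (2 * g' + k'' + 3)
        have hF : (((k'' + 1 + 1)! : ℕ) : ℚ) = ((k'' : ℚ) + 2) * (((k'' + 1)! : ℕ) : ℚ) := by
          rw [Nat.factorial_succ (k'' + 1)]
          push_cast
          ring
        have e1 : 2 * g' + (k'' + 1) + 1 = (2 * g' + k'' + 1) + 1 := by omega
        have e2 : 2 * g' + (k'' + 1) + 3 = 2 * g' + k'' + 3 + 1 := by omega
        have e3 : 2 * (g' + 1) + (k'' + 1) + 1 = (2 * g' + k'' + 1) + 1 + 1 + 1 := by omega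
        have e4 : 2 * (g' + 1) + (k'' + 1) + 3 = 2 * g' + k'' + 3 + 3 := by omega
        rw [e1, odf_succ, e2] at IH1
        rw [e3, odf_succ, odf_succ, odf_succ, e4]
        have hne : (4 * ((g' : ℚ) + 1) + 2 * (((k'' + 1 : ℕ) : ℤ) : ℚ) + 6) ≠ 0 := by
          push_cast
          positivity
        apply mul_left_cancel₀ hne
        push_cast [pow_succ] at E1 IH1 IH2 KI hF ⊢
        linear_combination ((((k'' + 1 + 1)! : ℕ) : ℚ)) * E1
          + (4*(g':ℚ)+2*(k'':ℚ)+7) * (4*(g':ℚ)+2*(k'':ℚ)+9) * (4*(g':ℚ)+2*(k'':ℚ)+8) * IH1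
          + 4 * (4*(g':ℚ)+2*(k'':ℚ)+5) * (4*(g':ℚ)+2*(k'':ℚ)+7) * (4*(g':ℚ)+2*(k'':ℚ)+9)
              * ((k'':ℚ)+2) * IH2
          + 4 * (4*(g':ℚ)+2*(k'':ℚ)+5) * (4*(g':ℚ)+2*(k'':ℚ)+7) * (4*(g':ℚ)+2*(k'':ℚ)+9)
              * (b (g' + 1) ((k'' : ℕ) : ℤ)) * hF
          - (4*(g':ℚ)+2*(k'':ℚ)+5) * (4*(g':ℚ)+2*(k'':ℚ)+7) * (4*(g':ℚ)+2*(k'':ℚ)+9)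
              * ((odf (2 * g' + k'' + 1) : ℕ) : ℚ) * 4 * 2 ^ k'' * KI
    · -- k ≥ g' + 2 : both sides vanish
      have hz : b (g' + 1 + 1) ((k : ℕ) : ℤ) = 0 := by
        apply hb_supp (g' + 1 + 1) (by omega)
        intro hcon
        obtain ⟨h1, h2⟩ := hcon
        have : (k : ℤ) ≤ (g' : ℤ) + 1 := by push_cast at h2; omega
        omega
      have hv : hzC (k + 1) (2 * (g' + 1) + k + 3) = 0 :=
        hzC_vanish _ _ (by omega)
      rw [hz, hv]
      ring



include hb_supp hb1 hrec in
lemma hz_pos : ∀ g' : ℕ,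
    (∀ K : ℕ, 0 ≤ b (g' + 1) ((K : ℕ) : ℤ)) ∧
      (∀ K : ℕ, K ≤ g' → 0 < b (g' + 1) ((K : ℕ) : ℤ)) := by
  intro g'
  induction g' with
  | zero =>
    constructor
    · intro K
      match K with
      | 0 => rw [Nat.cast_zero, hb1]; norm_num
      | K + 1 =>
        have hz : b 1 ((K + 1 : ℕ) : ℤ) = 0 := by
          apply hb_supp 1 (by omega)
          intro hcon
          obtain ⟨h1, h2⟩ := hcon
          push_cast at h2
          omega
        rw [hz]
    · intro K hK
      have : K = 0 := by omega
      subst this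
      rw [Nat.cast_zero, hb1]
      norm_num
  | succ g' IH =>
    obtain ⟨IHnn, IHpos⟩ := IH
    have key : ∀ K : ℕ, K ≤ g' + 1 → 0 < b (g' + 1 + 1) ((K : ℕ) : ℤ) := by
      intro K hK
      have hkle : ((K : ℕ) : ℤ) ≤ ((g' + 1 : ℕ) : ℤ) := by exact_mod_cast hK
      have E1 := hrec (g' + 1) (by omega) ((K : ℕ) : ℤ) (by positivity) hkle
      have hprev : 0 ≤ b (g' + 1) (((K : ℕ) : ℤ) - 1) := by
        match K with
        | 0 =>
          have hz : b (g' + 1) (((0 : ℕ) : ℤ) - 1) = 0 := by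
            apply hb_supp (g' + 1) (by omega)
            intro hcon
            obtain ⟨h1, h2⟩ := hcon
            norm_num at h1
          rw [hz]
        | K' + 1 =>
          have hc : ((K' + 1 : ℕ) : ℤ) - 1 = ((K' : ℕ) : ℤ) := by push_cast; ring
          rw [hc]
          exact IHnn K'
      have hbig : 0 < (4 * ((g' + 1 : ℕ) : ℚ) + 2 * (((K : ℕ) : ℤ) : ℚ) + 1)
          * (4 * ((g' + 1 : ℕ) : ℚ) + 2 * (((K : ℕ) : ℤ) : ℚ) + 3)
          * ((4 * ((g' + 1 : ℕ) : ℚ) + 2 * (((K : ℕ) : ℤ) : ℚ) + 2) * b (g' + 1) ((K : ℕ) : ℤ)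
            + 4 * (4 * ((g' + 1 : ℕ) : ℚ) + 2 * (((K : ℕ) : ℤ) : ℚ) - 1)
              * b (g' + 1) (((K : ℕ) : ℤ) - 1)) := by
        have c1 : (0:ℚ) < 4 * ((g' + 1 : ℕ) : ℚ) + 2 * (((K : ℕ) : ℤ) : ℚ) + 1 := by
          push_cast; positivity
        have c3 : (0:ℚ) < 4 * ((g' + 1 : ℕ) : ℚ) + 2 * (((K : ℕ) : ℤ) : ℚ) + 3 := by
          push_cast; positivity
        have c2 : (0:ℚ) < 4 * ((g' + 1 : ℕ) : ℚ) + 2 * (((K : ℕ) : ℤ) : ℚ) + 2 := by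
          push_cast; positivity
        have cm : (0:ℚ) < 4 * ((g' + 1 : ℕ) : ℚ) + 2 * (((K : ℕ) : ℤ) : ℚ) - 1 := by
          push_cast
          have : (0:ℚ) ≤ (K : ℚ) := by positivity
          have : (0:ℚ) ≤ (g' : ℚ) := by positivity
          linarith
        apply mul_pos (mul_pos c1 c3)
        rcases Nat.lt_or_ge K (g' + 1) with hlt | hge
        · have hb1pos : 0 < b (g' + 1) ((K : ℕ) : ℤ) := IHpos K (by omega)
          have t1 : 0 < (4 * ((g' + 1 : ℕ) : ℚ) + 2 * (((K : ℕ) : ℤ) : ℚ) + 2)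
              * b (g' + 1) ((K : ℕ) : ℤ) := mul_pos c2 hb1pos
          nlinarith [mul_nonneg (le_of_lt (by linarith : (0:ℚ) < 4 * (4 * ((g' + 1 : ℕ) : ℚ) + 2 * (((K : ℕ) : ℤ) : ℚ) - 1))) hprev]
        · -- K = g' + 1
          have hKeq : K = g' + 1 := by omega
          subst hKeq
          have hz : b (g' + 1) ((g' + 1 : ℕ) : ℤ) = 0 := by
            apply hb_supp (g' + 1) (by omega)
            intro hcon
            obtain ⟨h1, h2⟩ := hcon
            push_cast at h2
            omega
          rw [hz, mul_zero, zero_add]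
          have hc : ((g' + 1 : ℕ) : ℤ) - 1 = ((g' : ℕ) : ℤ) := by push_cast; ring
          rw [hc]
          have hb0pos : 0 < b (g' + 1) ((g' : ℕ) : ℤ) := IHpos g' (le_refl _)
          apply mul_pos (by linarith) hb0pos
      rw [← E1] at hbig
      have hc6 : (0:ℚ) < 4 * ((g' + 1 : ℕ) : ℚ) + 2 * (((K : ℕ) : ℤ) : ℚ) + 6 := by
        push_cast; positivity
      by_contra hcon
      push_neg at hcon
      nlinarith [hbig, hc6, mul_nonneg hc6.le (neg_nonneg.mpr hcon)]
    constructor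
    · intro K
      rcases Nat.lt_or_ge K (g' + 2) with hlt | hge
      · exact le_of_lt (key K (by omega))
      · have hz : b (g' + 1 + 1) ((K : ℕ) : ℤ) = 0 := by
          apply hb_supp (g' + 1 + 1) (by omega)
          intro hcon
          obtain ⟨h1, h2⟩ := hcon
          push_cast at h2
          omega
        rw [hz]
    · exact key

end Main

lemma rat_cross (q : ℚ) (X Y : ℤ) (h : q * (X : ℚ) = (Y : ℚ)) :
    q.num * X = Y * (q.den : ℤ) := by
  have hden : ((q.den : ℚ)) ≠ 0 := by
    exact_mod_cast q.den_ne_zero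
  have key : q * (q.den : ℚ) = (q.num : ℚ) := by
    nth_rewrite 1 [← Rat.num_div_den q]
    exact div_mul_cancel₀ _ hden
  have h2 : ((q.num : ℚ)) * (X : ℚ) = (Y : ℚ) * (q.den : ℚ) := by
    calc ((q.num : ℚ)) * (X : ℚ) = (q * (q.den : ℚ)) * X := by rw [key]
    _ = (q * X) * (q.den : ℚ) := by ring
    _ = (Y : ℚ) * (q.den : ℚ) := by rw [h]
  exact_mod_cast h2

theorem stmt7
    (b : ℕ → ℤ → ℚ)
    (hb_supp : ∀ g : ℕ, 1 ≤ g → ∀ k : ℤ, ¬ (0 ≤ k ∧ k ≤ (g : ℤ) - 1) → b g k = 0)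
    (hb1 : b 1 0 = 1)
    (hrec : ∀ g : ℕ, 1 ≤ g → ∀ k : ℤ, 0 ≤ k → k ≤ (g : ℤ) →
      (4 * (g : ℚ) + 2 * (k : ℚ) + 6) * b (g + 1) k =
        (4 * (g : ℚ) + 2 * (k : ℚ) + 1) * (4 * (g : ℚ) + 2 * (k : ℚ) + 3) *
          ((4 * (g : ℚ) + 2 * (k : ℚ) + 2) * b g k
            + 4 * (4 * (g : ℚ) + 2 * (k : ℚ) - 1) * b g (k - 1))) :
    ∀ g : ℕ, 1 ≤ g → ∀ k : ℤ, 0 ≤ k → k ≤ (g : ℤ) - 1 →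
      ∃ n : ℕ, 0 < n ∧ b g k = (n : ℚ) := by
  intro g hg k hk0 hk1
  obtain ⟨K, rfl⟩ : ∃ K : ℕ, k = (K : ℤ) := ⟨k.toNat, (Int.toNat_of_nonneg hk0).symm⟩
  obtain ⟨g', rfl⟩ : ∃ g', g = g' + 1 := ⟨g - 1, by omega⟩
  have hKg : K ≤ g' := by
    have h2 : (K : ℤ) ≤ (g' : ℤ) := by push_cast at hk1; linarith
    exact_mod_cast h2
  set v := b (g' + 1) ((K : ℕ) : ℤ) with hv_def
  have hpos : 0 < v := (hz_pos b hb_supp hb1 hrec g').2 K hKg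
  have hS := hz_main b hb_supp hb1 hrec g' K
  obtain ⟨d, hIN⟩ := hzC_int (2 * g' + K + 3) (K + 1)
  obtain ⟨a, w, hw, hOD⟩ := hzC_oddDen (K + 1) (2 * g' + K + 3)
  have hOodd : odf (2 * g' + K + 1) % 2 = 1 := odf_odd _
  -- step 1 : v * (2 * (2g'+K+3)!) = O * d
  have hKP : (((K + 1)! : ℚ) * 2 ^ K) ≠ 0 := by positivity
  have hv1 : v * (2 * ((2 * g' + K + 3)! : ℚ)) = ((odf (2 * g' + K + 1) : ℕ) : ℚ) * d := by
    apply mul_right_cancel₀ hKP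
    have hIN' := hIN
    rw [show K + 1 = K + 1 from rfl] at hIN'
    push_cast [pow_succ] at hIN' hS ⊢
    linear_combination (2 * (((2 * g' + K + 3)! : ℕ) : ℚ) * 2 ^ K) * hS
      + (((odf (2 * g' + K + 1) : ℕ) : ℚ) * 2 ^ K) * hIN'
  -- step 2 : v * 2^(2g'+K+3) = catalan (2g'+K+2) * d
  have hQ : (2 * (2 * g' + K + 2))! = 2 ^ (2 * g' + K + 2) * (2 * g' + K + 2)! * odf (2 * g' + K + 1) := by
    have h := factorial_two_mul (2 * g' + K + 1)
    have e1 : 2 * (2 * g' + K + 1 + 1) = 2 * (2 * g' + K + 2) := by omega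
    have e2 : 2 * g' + K + 1 + 1 = 2 * g' + K + 2 := by omega
    rw [e1, e2] at h
    exact h
  have hChoose : (2 * (2 * g' + K + 2)).choose (2 * g' + K + 2) * (2 * g' + K + 2)! * (2 * g' + K + 2)!
      = (2 * (2 * g' + K + 2))! := by
    have h := Nat.choose_mul_factorial_mul_factorial
      (show 2 * g' + K + 2 ≤ 2 * (2 * g' + K + 2) by omega)
    have e : 2 * (2 * g' + K + 2) - (2 * g' + K + 2) = 2 * g' + K + 2 := by omega
    rw [e] at h
    exact h
  have hCat : (2 * g' + K + 3) * catalan (2 * g' + K + 2) = (2 * (2 * g' + K + 2)).choose (2 * g' + K + 2) := by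
    have h := succ_mul_catalan_eq_centralBinom (2 * g' + K + 2)
    have e : 2 * g' + K + 2 + 1 = 2 * g' + K + 3 := by omega
    rw [e] at h
    exact h
  have hNat : (2 * (2 * g' + K + 2))!
      = (2 * g' + K + 3) * catalan (2 * g' + K + 2) * (2 * g' + K + 2)! * (2 * g' + K + 2)! := by
    rw [hCat, hChoose]
  have hF3 : (((2 * g' + K + 3)! : ℕ) : ℚ)
      = ((2 * g' + K + 3 : ℕ) : ℚ) * (((2 * g' + K + 2)! : ℕ) : ℚ) := by
    have h := Nat.factorial_succ (2 * g' + K + 2)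
    have e : 2 * g' + K + 2 + 1 = 2 * g' + K + 3 := by omega
    rw [e] at h
    exact_mod_cast congrArg (fun x : ℕ => (x : ℚ)) h
  have hMne : (((2 * g' + K + 3 : ℕ) : ℚ) * (((2 * g' + K + 2)! : ℕ) : ℚ)
      * (((2 * g' + K + 2)! : ℕ) : ℚ)) ≠ 0 := by positivity
  have hPow : (2 : ℚ) ^ (2 * g' + K + 3) = 2 * 2 ^ (2 * g' + K + 2) := by
    rw [show 2 * g' + K + 3 = (2 * g' + K + 2) + 1 from by omega, pow_succ]
    ring
  have hv2 : v * (2 : ℚ) ^ (2 * g' + K + 3) = (catalan (2 * g' + K + 2) : ℚ) * (d : ℚ) := by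
    apply mul_right_cancel₀ hMne
    rw [hPow]
    rw [hF3] at hv1
    have hQQ : (((2 * (2 * g' + K + 2))! : ℕ) : ℚ)
        = 2 ^ (2 * g' + K + 2) * (((2 * g' + K + 2)! : ℕ) : ℚ) * ((odf (2 * g' + K + 1) : ℕ) : ℚ) := by
      exact_mod_cast congrArg (fun x : ℕ => (x : ℚ)) hQ
    have hCC : (((2 * (2 * g' + K + 2))! : ℕ) : ℚ)
        = ((2 * g' + K + 3 : ℕ) : ℚ) * (catalan (2 * g' + K + 2) : ℚ)
          * (((2 * g' + K + 2)! : ℕ) : ℚ) * (((2 * g' + K + 2)! : ℕ) : ℚ) := by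
      exact_mod_cast congrArg (fun x : ℕ => (x : ℚ)) hNat
    linear_combination (2 ^ (2 * g' + K + 2) * (((2 * g' + K + 2)! : ℕ) : ℚ)) * hv1
      - (d : ℚ) * hQQ + (d : ℚ) * hCC
  -- step 3 : v * ((K+1)! * w) = O * 2^K * a
  have hv3 : v * ((((K + 1)! * w : ℕ)) : ℚ)
      = (((odf (2 * g' + K + 1) : ℤ) * 2 ^ K * a : ℤ) : ℚ) := by
    push_cast
    linear_combination ((w : ℚ)) * hS + (((odf (2 * g' + K + 1) : ℕ) : ℚ) * 2 ^ K) * hOD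
  -- cross-multiplied integer equations
  have hvA : v * (((2 ^ (2 * g' + K + 3) : ℤ)) : ℚ) = (((catalan (2 * g' + K + 2) : ℤ) * d : ℤ) : ℚ) := by
    push_cast
    linear_combination hv2
  have hnum1 : v.num * (2 ^ (2 * g' + K + 3) : ℤ)
      = ((catalan (2 * g' + K + 2) : ℤ) * d) * (v.den : ℤ) := rat_cross v _ _ hvA
  have hnum2 : v.num * (((K + 1)! * w : ℕ) : ℤ)
      = ((odf (2 * g' + K + 1) : ℤ) * 2 ^ K * a) * (v.den : ℤ) := rat_cross v _ _ hv3
  -- denominator divides a power of two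
  have hdvd1 : (v.den : ℤ) ∣ v.num * 2 ^ (2 * g' + K + 3) :=
    Dvd.intro_left _ hnum1.symm
  have hdvdN : v.den ∣ v.num.natAbs * 2 ^ (2 * g' + K + 3) := by
    have h := Int.natAbs_dvd_natAbs.mpr hdvd1
    have h2 : (v.num * 2 ^ (2 * g' + K + 3)).natAbs = v.num.natAbs * 2 ^ (2 * g' + K + 3) := by
      rw [Int.natAbs_mul, Int.natAbs_pow]
      norm_num
    rwa [h2] at h
  have hdvd2e : v.den ∣ 2 ^ (2 * g' + K + 3) :=
    Nat.Coprime.dvd_of_dvd_mul_left v.reduced.symm hdvdN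
  -- denominator is odd
  have hden_odd : ¬ 2 ∣ v.den := by
    intro h2
    have hnum_odd : ¬ 2 ∣ v.num.natAbs := by
      intro hh
      have := Nat.dvd_gcd hh h2
      rw [v.reduced] at this
      omega
    obtain ⟨t, ht⟩ := h2
    have hdd : (2 ^ (K + 1) : ℤ) ∣ v.num * (((K + 1)! * w : ℕ) : ℤ) := by
      rw [hnum2, ht]
      refine ⟨(odf (2 * g' + K + 1) : ℤ) * a * t, ?_⟩
      push_cast
      ring
    have hddN : 2 ^ (K + 1) ∣ v.num.natAbs * ((K + 1)! * w) := by
      have h := Int.natAbs_dvd_natAbs.mpr hdd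
      simpa [Int.natAbs_mul, Int.natAbs_pow] using h
    have cop : Nat.Coprime (2 ^ (K + 1)) (v.num.natAbs * w) := by
      apply Nat.Coprime.pow_left
      apply Nat.Coprime.mul_right
      · rw [Nat.coprime_two_left, Nat.odd_iff]
        omega
      · rw [Nat.coprime_two_left, Nat.odd_iff]
        exact hw
    have hfac : 2 ^ (K + 1) ∣ (K + 1)! := by
      apply cop.dvd_of_dvd_mul_right
      rw [show (K + 1)! * (v.num.natAbs * w) = v.num.natAbs * ((K + 1)! * w) from by ring]
      exact hddN
    have := two_pow_not_dvd_factorial (K + 1) (by omega) (K + 1) hfac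
    omega
  -- denominator equals one
  have hden1 : v.den = 1 := by
    have hcop : Nat.Coprime v.den (2 ^ (2 * g' + K + 3)) := by
      apply Nat.Coprime.pow_right
      rw [Nat.coprime_two_right, Nat.odd_iff]
      omega
    exact hcop.eq_one_of_dvd hdvd2e
  have hv_int : v = ((v.num : ℤ) : ℚ) := by
    conv_lhs => rw [← Rat.num_div_den v]
    rw [hden1]
    norm_num
  have hnum_pos : 0 < v.num := Rat.num_pos.mpr hpos
  refine ⟨v.num.toNat, ?_, ?_⟩
  · omega
  · rw [hv_int]
    have := Int.toNat_of_nonneg hnum_pos.le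
    exact_mod_cast this.symm
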